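/- Let σ: ℕ → ℕ be a bijection and let T = T_σ be the associated permutation operator on H. Then P(T) = P(T*), and every vector x = Σ_{n=1}^∞ c_n e_n ∈ H for which there exists a positive integer k with card([n]) ≤ k whenever c_n ≠ 0 belongs to P(T); that is, ⋃_{k∈ℕ} {Σ c_n e_n ∈ H : card([n]) ≤ k whenever c_n ≠ 0} ⊆ P(T). -/

import Mathlib

/-- The orbit `[n] = {σ^k n : k ∈ ℤ}` of `n` under the bijection `σ : ℕ → ℕ`. -/
def permOrbit (σ : Equiv.Perm ℕ) (n : ℕ) : Set ℕ := {m : ℕ | ∃ z : ℤ, (σ ^ z) n = m}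

/-- For a permutation operator `T e_n = e_{σ n}`, the periodic points of `T` coincide with
those of `T*`, and every vector whose nonzero coordinates are supported on orbits of
uniformly bounded (finite) cardinality is periodic. -/
theorem permutation_periodic_points_superset
    {H : Type*} [NormedAddCommGroup H] [InnerProductSpace ℂ H] [CompleteSpace H]
    (e : HilbertBasis ℕ ℂ H) (σ : Equiv.Perm ℕ) (T : H →L[ℂ] H)
    (hT : ∀ n, T (e n) = e (σ n)) :
    ({x : H | ∃ m : ℕ, 0 < m ∧ (T ^ m) x = x}
        = {x : H | ∃ m : ℕ, 0 < m ∧ ((ContinuousLinearMap.adjoint T) ^ m) x = x}) ∧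
    {x : H | ∃ k : ℕ, 0 < k ∧ ∀ n, e.repr x n ≠ 0 →
        (permOrbit σ n).Finite ∧ (permOrbit σ n).ncard ≤ k}
      ⊆ {x : H | ∃ m : ℕ, 0 < m ∧ (T ^ m) x = x} := by
  have hadj : ∀ m, (ContinuousLinearMap.adjoint T) (e m) = e (σ.symm m) := by
    intro m
    apply e.repr.injective
    ext k
    rw [e.repr_apply_apply, e.repr_apply_apply, ContinuousLinearMap.adjoint_inner_right, hT]
    rw [orthonormal_iff_ite.mp e.orthonormal, orthonormal_iff_ite.mp e.orthonormal]
    congr 1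
    simp [eq_comm, Equiv.eq_symm_apply]
  have hdense : Dense (Submodule.span ℂ (Set.range e) : Set H) :=
    Submodule.dense_iff_topologicalClosure_eq_top.mpr e.dense_span
  have h1 : ∀ x, (ContinuousLinearMap.adjoint T) (T x) = x := by
    intro x
    have : (ContinuousLinearMap.adjoint T).comp T = ContinuousLinearMap.id ℂ H := by
      refine ContinuousLinearMap.ext_on hdense ?_
      rintro _ ⟨n, rfl⟩
      simp [hT, hadj]
    simpa using DFunLike.congr_fun this x
  have h2 : ∀ x, T ((ContinuousLinearMap.adjoint T) x) = x := by
    intro x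
    have : T.comp (ContinuousLinearMap.adjoint T) = ContinuousLinearMap.id ℂ H := by
      refine ContinuousLinearMap.ext_on hdense ?_
      rintro _ ⟨n, rfl⟩
      simp [hT, hadj]
    simpa using DFunLike.congr_fun this x
  have hc1 : ∀ (m : ℕ) (x : H), ((ContinuousLinearMap.adjoint T) ^ m) ((T ^ m) x) = x := by
    intro m
    induction m with
    | zero => intro x; simp
    | succ m ih =>
      intro x
      rw [pow_succ (ContinuousLinearMap.adjoint T), pow_succ' T,
        ContinuousLinearMap.mul_apply, ContinuousLinearMap.mul_apply, h1]
      exact ih x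
  have hc2 : ∀ (m : ℕ) (x : H), (T ^ m) (((ContinuousLinearMap.adjoint T) ^ m) x) = x := by
    intro m
    induction m with
    | zero => intro x; simp
    | succ m ih =>
      intro x
      rw [pow_succ T, pow_succ' (ContinuousLinearMap.adjoint T),
        ContinuousLinearMap.mul_apply, ContinuousLinearMap.mul_apply, h2]
      exact ih x
  constructor
  · ext x
    constructor
    · rintro ⟨m, hm, hx⟩
      refine ⟨m, hm, ?_⟩
      conv_lhs => rw [← hx]
      exact hc1 m x
    · rintro ⟨m, hm, hx⟩
      refine ⟨m, hm, ?_⟩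
      conv_lhs => rw [← hx]
      exact hc2 m x
  · rintro x ⟨k, hk, hsupp⟩
    refine ⟨k.factorial, k.factorial_pos, ?_⟩
    -- each coordinate in the support is fixed by σ ^ k!
    have hfix : ∀ n, e.repr x n ≠ 0 → (σ ^ k.factorial) n = n := by
      intro n hn
      obtain ⟨hfin, hcard⟩ := hsupp n hn
      have horb : MulAction.orbit (Subgroup.zpowers σ) n = permOrbit σ n := by
        ext m
        constructor
        · rintro ⟨⟨g, z, rfl⟩, rfl⟩
          exact ⟨z, rfl⟩
        · rintro ⟨z, rfl⟩
          exact ⟨⟨σ ^ z, z, rfl⟩, rfl⟩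
      have hfin' : (MulAction.orbit (Subgroup.zpowers σ) n).Finite := horb ▸ hfin
      haveI : Finite (MulAction.orbit (Subgroup.zpowers σ) n) := hfin'
      haveI := hfin'.fintype
      have hp := MulAction.minimalPeriod_eq_card (a := σ) (b := n)
      have hple : Function.minimalPeriod (σ • ·) n ≤ k := by
        rw [hp, ← Nat.card_eq_fintype_card, Nat.card_coe_set_eq, horb]
        exact hcard
      have hppos : 0 < Function.minimalPeriod (σ • ·) n :=
        Nat.pos_of_ne_zero (NeZero.ne _)
      have hdvd : Function.minimalPeriod (σ • ·) n ∣ k.factorial :=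
        Nat.dvd_factorial hppos hple
      obtain ⟨c, hc⟩ := hdvd
      have hper : Function.IsPeriodicPt (σ • ·) k.factorial n := by
        rw [hc]
        exact (Function.isPeriodicPt_minimalPeriod (σ • ·) n).mul_const c
      have : (σ • ·)^[k.factorial] n = n := hper
      have h' : (⇑σ)^[k.factorial] n = n := this
      rwa [Equiv.Perm.iterate_eq_pow] at h'
    have hpow : ∀ (j : ℕ) (n : ℕ), (T ^ j) (e n) = e ((σ ^ j) n) := by
      intro j
      induction j with
      | zero => intro n; simp
      | succ j ih =>
        intro n
        rw [pow_succ' T, ContinuousLinearMap.mul_apply, ih, hT, pow_succ' σ,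
          Equiv.Perm.mul_apply]
    have hs := (e.hasSum_repr x).mapL (T ^ k.factorial)
    have heq : (fun n => (T ^ k.factorial) (e.repr x n • e n)) = fun n => e.repr x n • e n := by
      funext n
      rw [map_smul]
      by_cases h : e.repr x n = 0
      · simp [h]
      · rw [hpow, hfix n h]
    rw [heq] at hs
    exact hs.unique (e.hasSum_repr x)
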